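/- For every n ≥ 4, the in-star on n vertices (one central vertex v with an arc from each of the other n−1 vertices into v) is not (2,3)-cordial. -/

import Mathlib

open Finset

/-- A (0,1)-vertex labeling is friendly if the counts of 0s and 1s differ by at most 1. -/
def vertexFriendly {V : Type*} [Fintype V] (f : V → ℤ) : Prop :=
  |((univ.filter (fun v => f v = 0)).card : ℤ) - ((univ.filter (fun v => f v = 1)).card : ℤ)| ≤ 1

/-- Number of arcs of `A` receiving induced label `i` under `g (u,v) = f v - f u`. -/
def arcCount {V : Type*} [DecidableEq V] (A : Finset (V × V)) (f : V → ℤ) (i : ℤ) : ℕ :=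
  (A.filter (fun p => f p.2 - f p.1 = i)).card

/-- The induced arc labeling is friendly: counts of labels -1, 0, 1 pairwise differ by ≤ 1. -/
def arcFriendly {V : Type*} [DecidableEq V] (A : Finset (V × V)) (f : V → ℤ) : Prop :=
  ∀ i ∈ ({-1, 0, 1} : Set ℤ), ∀ j ∈ ({-1, 0, 1} : Set ℤ),
    |(arcCount A f i : ℤ) - (arcCount A f j : ℤ)| ≤ 1

/-- A digraph (given by its arc set) is (2,3)-cordial. -/
def cordial23 {V : Type*} [Fintype V] [DecidableEq V] (A : Finset (V × V)) : Prop :=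
  ∃ f : V → ℤ, (∀ v, f v = 0 ∨ f v = 1) ∧ vertexFriendly f ∧ arcFriendly A f

/-- The arcs of the in-star on Fin n: center is vertex 0, arcs point from all other vertices into it. -/
def inStarArcs (n : ℕ) : Finset (Fin n × Fin n) :=
  univ.filter (fun p => p.2.val = 0 ∧ p.1.val ≠ 0)

/-- For n ≥ 4, the in-star on n vertices is not (2,3)-cordial. -/
theorem inStar_not_cordial (n : ℕ) (hn : 4 ≤ n) : ¬ cordial23 (inStarArcs n) := by
  rintro ⟨f, hf01, -, hA⟩
  have h0 : (0:ℕ) < n := by omega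
  set v0 : Fin n := ⟨0, h0⟩ with hv0
  -- the three sample arcs
  have harc : ∀ (i : ℕ) (hi : i < n), i ≠ 0 → ((⟨i, hi⟩ : Fin n), v0) ∈ inStarArcs n := by
    intro i hi hne
    simp [inStarArcs, hv0, hne]
  -- card lower bound
  have h1 : (1:ℕ) < n := by omega
  have h2 : (2:ℕ) < n := by omega
  have h3 : (3:ℕ) < n := by omega
  have hsub : ({((⟨1,h1⟩:Fin n), v0), ((⟨2,h2⟩:Fin n), v0), ((⟨3,h3⟩:Fin n), v0)} :
      Finset (Fin n × Fin n)) ⊆ inStarArcs n := by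
    intro p hp
    simp only [Finset.mem_insert, Finset.mem_singleton] at hp
    rcases hp with rfl | rfl | rfl
    · exact harc 1 h1 (by omega)
    · exact harc 2 h2 (by omega)
    · exact harc 3 h3 (by omega)
  have hcard3 : 3 ≤ (inStarArcs n).card := by
    refine le_trans (le_of_eq ?_) (Finset.card_le_card hsub)
    rw [Finset.card_insert_of_notMem, Finset.card_insert_of_notMem, Finset.card_singleton]
    · simp [Prod.ext_iff, Fin.ext_iff]
    · simp [Prod.ext_iff, Fin.ext_iff]
  -- partition into three filters
  have hcover : (inStarArcs n).card ≤
      arcCount (inStarArcs n) f (-1) + arcCount (inStarArcs n) f 0 + arcCount (inStarArcs n) f 1 := by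
    unfold arcCount
    calc (inStarArcs n).card
        ≤ (((inStarArcs n).filter (fun p => f p.2 - f p.1 = -1)) ∪
           ((inStarArcs n).filter (fun p => f p.2 - f p.1 = 0)) ∪
           ((inStarArcs n).filter (fun p => f p.2 - f p.1 = 1))).card := by
          apply Finset.card_le_card
          intro p hp
          simp only [Finset.mem_union, Finset.mem_filter]
          rcases hf01 p.1 with ha | ha <;> rcases hf01 p.2 with hb | hb <;>
            simp [ha, hb, hp]
      _ ≤ _ := le_trans (Finset.card_union_le _ _)
          (by exact Nat.add_le_add_right (Finset.card_union_le _ _) _)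
  -- one count is zero
  have hf0 : f v0 = 0 ∨ f v0 = 1 := hf01 v0
  have hz : arcCount (inStarArcs n) f 1 = 0 ∨ arcCount (inStarArcs n) f (-1) = 0 := by
    rcases hf0 with h | h
    · left
      unfold arcCount
      rw [Finset.card_eq_zero, Finset.filter_eq_empty_iff]
      intro p hp
      have hp2 : p.2 = v0 := by
        simp only [inStarArcs, Finset.mem_filter] at hp
        exact Fin.ext hp.2.1
      rcases hf01 p.1 with ha | ha <;> rw [hp2, h, ha] <;> norm_num
    · right
      unfold arcCount
      rw [Finset.card_eq_zero, Finset.filter_eq_empty_iff]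
      intro p hp
      have hp2 : p.2 = v0 := by
        simp only [inStarArcs, Finset.mem_filter] at hp
        exact Fin.ext hp.2.1
      rcases hf01 p.1 with ha | ha <;> rw [hp2, h, ha] <;> norm_num
  have ha1 := hA (-1) (by simp) 1 (by simp)
  have ha2 := hA 0 (by simp) 1 (by simp)
  have ha3 := hA 1 (by simp) (-1) (by simp)
  have ha4 := hA 0 (by simp) (-1) (by simp)
  rcases hz with h | h
  · rw [h] at ha1 ha2 hcover
    rw [abs_le] at ha1 ha2
    push_cast at ha1 ha2
    omega
  · rw [h] at ha3 ha4 hcover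
    rw [abs_le] at ha3 ha4
    push_cast at ha3 ha4
    omega
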